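/- Let H : {1,…,d} → ℝ be an energy function, β ∈ ℝ, and π the Gibbs distribution π_s = e^{−βH(s)}/Z with Z = ∑_s e^{−βH(s)}. Let T be a d×d column-stochastic matrix (T_{s,s'} ≥ 0 and ∑_s T_{s,s'} = 1 for each s') satisfying Tπ = π. Then for every probability vector q on {1,…,d}, the classical entropy production is nonnegative: H(Tq) − H(q) − β ∑_s H(s)[(Tq)_s − q_s] ≥ 0. -/

import Mathlib

open Matrix
open scoped BigOperators Classical

/-- Shannon entropy of a (probability) vector. -/
noncomputable def shannonEntropy {F : Type*} [Fintype F] (p : F → ℝ) : ℝ :=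
  ∑ n, Real.negMulLog (p n)

lemma key_id {p w : ℝ} (hp : 0 ≤ p) (hw : 0 < w) :
    w * ((p / w) * Real.log (p / w)) = p * Real.log p - p * Real.log w := by
  rcases eq_or_lt_of_le hp with h | h
  · simp [← h]
  · rw [Real.log_div (ne_of_gt h) (ne_of_gt hw)]
    field_simp

/-- Classical second law: nonnegativity of the entropy production for a
column-stochastic matrix preserving the Gibbs distribution. -/
theorem classical_entropy_production_nonneg
    {d : ℕ}
    (H : Fin d → ℝ) (β : ℝ)
    (Z : ℝ) (hZ : Z = ∑ s, Real.exp (-β * H s))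
    (π : Fin d → ℝ) (hπ : ∀ s, π s = Real.exp (-β * H s) / Z)
    (T : Matrix (Fin d) (Fin d) ℝ)
    (hT0 : ∀ s s', 0 ≤ T s s') (hT1 : ∀ s', ∑ s, T s s' = 1)
    (hTπ : T *ᵥ π = π)
    (q : Fin d → ℝ) (hq0 : ∀ s, 0 ≤ q s) (hq1 : ∑ s, q s = 1) :
    0 ≤ shannonEntropy (T *ᵥ q) - shannonEntropy q -
        β * ∑ s, H s * ((T *ᵥ q) s - q s) := by
  rcases Nat.eq_zero_or_pos d with hd | hd
  · subst hd; simp [shannonEntropy]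
  haveI : Nonempty (Fin d) := Fin.pos_iff_nonempty.mp hd
  have hZpos : 0 < Z := by
    rw [hZ]; exact Finset.sum_pos (fun s _ => Real.exp_pos _) Finset.univ_nonempty
  have hπpos : ∀ s, 0 < π s := fun s => by rw [hπ]; positivity
  set f : ℝ → ℝ := fun x => x * Real.log x with hf
  have hconv : ConvexOn ℝ (Set.Ici 0) f := Real.convexOn_mul_log
  have hTπ' : ∀ s, ∑ s', T s s' * π s' = π s := by
    intro s
    have := congrFun hTπ s
    simpa [Matrix.mulVec, dotProduct] using this
  have hTq : ∀ s, (T *ᵥ q) s = ∑ s', T s s' * q s' := by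
    intro s; simp [Matrix.mulVec, dotProduct]
  have hTq0 : ∀ s, 0 ≤ (T *ᵥ q) s := by
    intro s; rw [hTq]
    exact Finset.sum_nonneg fun s' _ => mul_nonneg (hT0 s s') (hq0 s')
  have hTq1 : ∑ s, (T *ᵥ q) s = 1 := by
    simp only [hTq]
    rw [Finset.sum_comm]
    simp_rw [← Finset.sum_mul, hT1, one_mul, hq1]
  -- main Jensen step
  have key : ∑ s, π s * f ((T *ᵥ q) s / π s) ≤ ∑ s, π s * f (q s / π s) := by
    have step : ∀ s, π s * f ((T *ᵥ q) s / π s) ≤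
        ∑ s', T s s' * π s' * f (q s' / π s') := by
      intro s
      have hw0 : ∀ s' ∈ Finset.univ, 0 ≤ T s s' * π s' / π s :=
        fun s' _ => div_nonneg (mul_nonneg (hT0 s s') (hπpos s').le) (hπpos s).le
      have hw1 : ∑ s', T s s' * π s' / π s = 1 := by
        rw [← Finset.sum_div, hTπ' s, div_self (ne_of_gt (hπpos s))]
      have hmem : ∀ s' ∈ Finset.univ, q s' / π s' ∈ Set.Ici (0 : ℝ) :=
        fun s' _ => Set.mem_Ici.mpr (div_nonneg (hq0 s') (hπpos s').le)
      have hrep : (T *ᵥ q) s / π s =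
          ∑ s', (T s s' * π s' / π s) • (q s' / π s') := by
        rw [hTq, Finset.sum_div]
        refine Finset.sum_congr rfl fun s' _ => ?_
        have h1 : π s' ≠ 0 := ne_of_gt (hπpos s')
        have h2 : π s ≠ 0 := ne_of_gt (hπpos s)
        rw [smul_eq_mul, div_mul_div_comm, div_eq_div_iff h2 (mul_ne_zero h2 h1)]
        ring
      have hjen := hconv.map_sum_le hw0 hw1 hmem
      rw [← hrep] at hjen
      calc π s * f ((T *ᵥ q) s / π s)
          ≤ π s * ∑ s', (T s s' * π s' / π s) * f (q s' / π s') :=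
            mul_le_mul_of_nonneg_left (by simpa using hjen) (le_of_lt (hπpos s))
        _ = ∑ s', T s s' * π s' * f (q s' / π s') := by
            rw [Finset.mul_sum]
            refine Finset.sum_congr rfl fun s' _ => ?_
            field_simp
            rw [div_eq_iff (ne_of_gt (hπpos s))]
            ring
    calc ∑ s, π s * f ((T *ᵥ q) s / π s)
        ≤ ∑ s, ∑ s', T s s' * π s' * f (q s' / π s') :=
          Finset.sum_le_sum fun s _ => step s
      _ = ∑ s', π s' * f (q s' / π s') := by
          rw [Finset.sum_comm]
          refine Finset.sum_congr rfl fun s' _ => ?_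
          rw [← Finset.sum_mul]
          simp_rw [mul_assoc] at *
          rw [← Finset.sum_mul, hT1, one_mul]
  -- rewrite both sides
  have expand : ∀ p : Fin d → ℝ, (∀ s, 0 ≤ p s) → (∑ s, p s = 1) →
      ∑ s, π s * f (p s / π s) =
        -shannonEntropy p + β * ∑ s, H s * p s + Real.log Z := by
    intro p hp0 hp1
    have : ∀ s, π s * f (p s / π s) =
        p s * Real.log (p s) - p s * Real.log (π s) := fun s =>
      key_id (hp0 s) (hπpos s)
    simp_rw [this]
    have hlogπ : ∀ s, Real.log (π s) = -β * H s - Real.log Z := by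
      intro s
      rw [hπ, Real.log_div (Real.exp_ne_zero _) (ne_of_gt hZpos), Real.log_exp]
    rw [Finset.sum_sub_distrib]
    have h1 : ∑ s, p s * Real.log (p s) = -shannonEntropy p := by
      simp [shannonEntropy, Real.negMulLog]
    have h2 : ∑ s, p s * Real.log (π s) =
        -β * (∑ s, H s * p s) - Real.log Z := by
      simp_rw [hlogπ, mul_sub]
      rw [Finset.sum_sub_distrib, ← Finset.sum_mul, hp1, one_mul]
      congr 1
      rw [Finset.mul_sum]
      exact Finset.sum_congr rfl fun s _ => by ring
    rw [h1, h2]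
    ring
  rw [expand _ hTq0 hTq1, expand _ hq0 hq1] at key
  have hsplit : ∑ s, H s * ((T *ᵥ q) s - q s) =
      (∑ s, H s * (T *ᵥ q) s) - ∑ s, H s * q s := by
    simp [mul_sub, Finset.sum_sub_distrib]
  rw [hsplit]
  nlinarith [key]
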